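/- The non-autonomous 3-dimensional H1 map φ(x₁,x₂,x₃;α₁,α₂) = (−x₁, x₂ + x₂(α₂−α₁)/(x₂(x₁+x₃)+μ−α₂), x₃ + (μ−α₂)/x₂; 2μ−α₂, 2μ−α₁) satisfies I∘φ = −I for I(x;α) = (x₂(x₁²−x₃²)+μ(x₁−x₃)−α₁x₁+α₂x₃)/x₁, wherever the denominators are nonzero. Consequently x₂(x₁²−x₃²)+μ(x₁−x₃)−α₁x₁+α₂x₃ is an invariant (being x₁·I with both factors anti-invariant). -/

import Mathlib

/-- Anti-invariance of `I` for the non-autonomous 3-dimensional H1 map,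
with parameter update `(α₁,α₂) ↦ (2μ-α₂, 2μ-α₁)`, and the resulting invariant. -/
theorem h1_3d_nonautonomous {K : Type*} [Field K] (hchar : (2 : K) ≠ 0)
    (μ α₁ α₂ x₁ x₂ x₃ : K) (h1 : x₁ ≠ 0) (h2 : x₂ ≠ 0)
    (hd : x₂*(x₁ + x₃) + μ - α₂ ≠ 0) :
    let x₁' := -x₁
    let x₂' := x₂ + x₂*(α₂ - α₁)/(x₂*(x₁ + x₃) + μ - α₂)
    let x₃' := x₃ + (μ - α₂)/x₂
    let α₁' := 2*μ - α₂
    let α₂' := 2*μ - α₁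
    let I : K → K → K → K → K → K := fun a b d p q =>
      (b*(a^2 - d^2) + μ*(a - d) - p*a + q*d)/a
    I x₁' x₂' x₃' α₁' α₂' = -I x₁ x₂ x₃ α₁ α₂ ∧
    x₂'*(x₁'^2 - x₃'^2) + μ*(x₁' - x₃') - α₁'*x₁' + α₂'*x₃' =
      x₂*(x₁^2 - x₃^2) + μ*(x₁ - x₃) - α₁*x₁ + α₂*x₃ := by
  refine ⟨?_, ?_⟩ <;>
    field_simp <;>
    ring
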